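/- In a ℤ-graded Poisson superalgebra 𝒜 with bracket of degree −2, let Ψ ∈ 𝒜^3 (odd) and N ∈ 𝒜^2 (even). Define X∘Y = {{X,Ψ},Y} for X, Y ∈ 𝒜^1 and N̂(X) = {N,X}. Then {{X,{Ψ,N}},Y} = N̂(X)∘Y + X∘N̂(Y) − N̂(X∘Y) for all X, Y ∈ 𝒜^1; i.e. the contracted product ∘_{N̂} is the derived bracket generated by the Hamiltonian {Ψ,N}. -/
import Mathlib


/-- In an ℕ-graded Poisson superalgebra with bracket of degree
`−2`, let `Ψ ∈ 𝒜³` (odd) and `N ∈ 𝒜²` (even). With `X∘Y = {{X,Ψ},Y}` and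
`N̂(X) = {N,X}`, one has `{{X,{Ψ,N}},Y} = N̂(X)∘Y + X∘N̂(Y) − N̂(X∘Y)` for all
`X, Y ∈ 𝒜¹`: the contracted product `∘_N̂` is the derived bracket generated by
the Hamiltonian `{Ψ,N}`. -/
theorem contracted_product_is_derived_bracket
    {A : Type*} [AddCommGroup A] [Module ℝ A]
    (G : ℕ → Submodule ℝ A)                   -- the grading 𝒜^k
    (P : A → A → A)                            -- the Poisson bracket {·,·}
    (hbilL : ∀ y : A, IsLinearMap ℝ (fun x => P x y))
    (hbilR : ∀ x : A, IsLinearMap ℝ (P x))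
    (hdeg : ∀ (a b : ℕ) (x y : A), x ∈ G a → y ∈ G b → P x y ∈ G (a + b - 2))
    (hlow : ∀ (a b : ℕ) (x y : A), a + b < 2 → x ∈ G a → y ∈ G b → P x y = 0)
    (hanti : ∀ (a b : ℕ) (x y : A), x ∈ G a → y ∈ G b →
      P x y = -(((-1 : ℝ) ^ (a * b)) • P y x))
    (hjac : ∀ (a b : ℕ) (x y z : A), x ∈ G a → y ∈ G b →
      P x (P y z) = P (P x y) z + ((-1 : ℝ) ^ (a * b)) • P y (P x z))
    (Ψ : A) (hΨ : Ψ ∈ G 3) (N : A) (hN : N ∈ G 2) :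
    ∀ X ∈ G 1, ∀ Y ∈ G 1,
      P (P X (P Ψ N)) Y
        = P (P (P N X) Ψ) Y + P (P X Ψ) (P N Y) - P N (P (P X Ψ) Y) := by
  intro X hX Y hY
  have hXΨ : P X Ψ ∈ G 2 := hdeg 1 3 X Ψ hX hΨ
  have hXN : P X N ∈ G 1 := hdeg 1 2 X N hX hN
  have key1 := hjac 1 3 X Ψ N hX hΨ
  have key2 := hanti 2 2 (P X Ψ) N hXΨ hN
  have key3 := hanti 3 1 Ψ (P X N) hΨ hXN
  have key4 := hanti 1 2 X N hX hN
  have key5 := hjac 2 2 N (P X Ψ) Y hN hXΨ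
  norm_num at key1 key2 key3 key4 key5
  have e1 : P Ψ (P X N) = - P (P N X) Ψ := by
    rw [key3, key4, (hbilL Ψ).map_neg]
  rw [key1, key2, e1, (hbilL Y).map_add, (hbilL Y).map_neg, (hbilL Y).map_neg,
    (hbilL Y).map_neg, key5]
  abel
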